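/- (Degenerate Pompeiu / Van Schooten) Let an equilateral triangle have vertices v_k = c + R·exp(I·(2πk/3 + θ)), k = 0,1,2, with R > 0, and let M lie on its circumcircle, i.e. |M − c| = R. Then the triangle with side lengths d₀, d₁, d₂ (d_k = |M − v_k|) is degenerate: some one of the three distances equals the sum of the other two, i.e. there is a permutation (i,j,k) of (0,1,2) with d_i = d_j + d_k. -/

import Mathlib

open Complex Real Finset

lemma abs_exp_sub_exp (a b : ℝ) :
    ‖Complex.exp (Complex.I * a) - Complex.exp (Complex.I * b)‖
      = 2 * |Real.sin ((a - b) / 2)| := by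
  have key : Complex.exp (Complex.I * a) - Complex.exp (Complex.I * b)
      = Complex.exp (Complex.I * ((a + b) / 2 : ℝ)) *
        (2 * Complex.I * Complex.sin (((a - b) / 2 : ℝ) : ℂ)) := by
    rw [Complex.sin]
    rw [show Complex.exp (Complex.I * a) = Complex.exp (Complex.I * ((a+b)/2 : ℝ) + Complex.I * (((a-b)/2 : ℝ))) by push_cast; ring_nf,
        show Complex.exp (Complex.I * b) = Complex.exp (Complex.I * ((a+b)/2 : ℝ) + (-(((a-b)/2 : ℝ) : ℂ)) * Complex.I) by push_cast; ring_nf]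
    rw [Complex.exp_add, Complex.exp_add]
    ring_nf
    rw [Complex.I_sq]
    ring_nf
  rw [key, norm_mul]
  have h1 : ‖Complex.exp (Complex.I * ((a + b) / 2 : ℝ))‖ = 1 := by
    rw [mul_comm]; exact Complex.norm_exp_ofReal_mul_I _
  rw [h1, one_mul, norm_mul, norm_mul, ← Complex.ofReal_sin, Complex.norm_real, Real.norm_eq_abs,
    Complex.norm_two, Complex.norm_I]
  ring

lemma tri_abs (A B C : ℝ) (h : A + C = B) :
    |A| = |B| + |C| ∨ |B| = |A| + |C| ∨ |C| = |A| + |B| := by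
  rcases abs_cases A with ⟨hA, _⟩ | ⟨hA, _⟩ <;>
  rcases abs_cases B with ⟨hB, _⟩ | ⟨hB, _⟩ <;>
  rcases abs_cases C with ⟨hC, _⟩ | ⟨hC, _⟩ <;>
  [skip; skip; skip; skip; skip; skip; skip; skip] <;>
  first
  | (left; linarith)
  | (right; left; linarith)
  | (right; right; linarith)

theorem degenerate_pompeiu_van_schooten (c M : ℂ) (R θ : ℝ) (hR : 0 < R)
    (hM : ‖M - c‖ = R)
    (d : Fin 3 → ℝ)
    (hd : ∀ k : Fin 3,
      d k = ‖M - (c + R * Complex.exp (Complex.I * ((2 * π * (k : ℕ) / 3 + θ : ℝ) : ℂ)))‖) :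
    d 0 = d 1 + d 2 ∨ d 1 = d 0 + d 2 ∨ d 2 = d 0 + d 1 := by
  -- write M - c = R * exp(I ψ)
  have hu : ‖(M - c) / R‖ = 1 := by
    rw [norm_div, hM, Complex.norm_real, Real.norm_eq_abs, abs_of_pos hR, div_self hR.ne']
  obtain ⟨ψ, hψ⟩ := (Complex.norm_eq_one_iff _).mp hu
  have hMc : M - c = R * Complex.exp (Complex.I * ψ) := by
    have hR0 : (R : ℂ) ≠ 0 := by exact_mod_cast hR.ne'
    rw [mul_comm Complex.I (ψ : ℂ), hψ, mul_comm, div_mul_cancel₀ _ hR0]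
  have hd' : ∀ k : Fin 3,
      d k = 2 * R * |Real.sin ((ψ - (2 * π * (k : ℕ) / 3 + θ)) / 2)| := by
    intro k
    rw [hd k, show M - (c + R * Complex.exp (Complex.I * ((2 * π * (k : ℕ) / 3 + θ : ℝ) : ℂ)))
        = (R : ℂ) * (Complex.exp (Complex.I * ψ) - Complex.exp (Complex.I * ((2 * π * (k : ℕ) / 3 + θ : ℝ) : ℂ))) by
      rw [mul_sub, ← hMc]; ring]
    rw [norm_mul, Complex.norm_real, Real.norm_eq_abs, abs_of_pos hR, abs_exp_sub_exp]
    ring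
  -- the sine identity
  set s : ℝ := (ψ - θ) / 2 with hs
  have e0 : (ψ - (2 * π * ((0 : Fin 3) : ℕ) / 3 + θ)) / 2 = s := by simp [hs]; try ring
  have e1 : (ψ - (2 * π * ((1 : Fin 3) : ℕ) / 3 + θ)) / 2 = s - π / 3 := by simp [hs]; try ring
  have e2 : (ψ - (2 * π * ((2 : Fin 3) : ℕ) / 3 + θ)) / 2 = s - 2 * π / 3 := by simp [hs]; try ring
  have hiden : Real.sin s + Real.sin (s - 2 * π / 3) = Real.sin (s - π / 3) := by
    have h1 : Real.sin (s - π / 3) = Real.sin s * Real.cos (π/3) - Real.cos s * Real.sin (π/3) := Real.sin_sub _ _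
    have h2 : Real.sin (s - 2 * π / 3) = Real.sin s * Real.cos (2*π/3) - Real.cos s * Real.sin (2*π/3) := by
      rw [show s - 2*π/3 = s - 2*π/3 from rfl, Real.sin_sub]
    have hc : Real.cos (2*π/3) = -(1/2) := by
      rw [show (2:ℝ)*π/3 = π - π/3 by ring, Real.cos_pi_sub, Real.cos_pi_div_three]
    have hs2 : Real.sin (2*π/3) = Real.sqrt 3 / 2 := by
      rw [show (2:ℝ)*π/3 = π - π/3 by ring, Real.sin_pi_sub, Real.sin_pi_div_three]
    rw [h1, h2, hc, hs2, Real.cos_pi_div_three, Real.sin_pi_div_three]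
    ring
  have key := tri_abs (2 * R * Real.sin s) (2 * R * Real.sin (s - π/3))
      (2 * R * Real.sin (s - 2*π/3)) (by nlinarith [hiden])
  have habs : ∀ x : ℝ, |2 * R * x| = 2 * R * |x| := by
    intro x; rw [abs_mul, abs_of_pos (by linarith : (0:ℝ) < 2 * R)]
  rw [habs, habs, habs] at key
  rw [hd' 0, hd' 1, hd' 2, e0, e1, e2]
  tauto
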